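/- arXiv:1209.5367 — 2 statements merged into one kernel-verified Lean document; each statement's English description precedes it below -/
import Mathlib

section
/- (Density Theorem, strong operator topology.) For every bounded operator A on H, every ε > 0, every m ∈ ℕ, and every family of vectors v : Fin m → H, there exist a finite subset D ⊆ ℤ^n and a bounded operator T on H that is local upon D such that ‖A (v i) − T (v i)‖ < ε for all i; that is, the local operators are dense in the bounded operators on H in the strong operator topology. -/
open scoped ENNReal

noncomputable section

namespace QCA

abbrev Lat (n : ℕ) : Type := Fin n → ℤ

def Conf (n : ℕ) (A : Type*) (q0 : A) : Type _ :=
  {c : Lat n → A // {x : Lat n | c x ≠ q0}.Finite}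

def c0 (n : ℕ) (A : Type*) (q0 : A) : Conf n A q0 :=
  ⟨fun _ => q0, by simp⟩

abbrev H (n : ℕ) (A : Type*) (q0 : A) : Type _ := lp (fun _ : Conf n A q0 => ℂ) 2

def eVec {n : ℕ} {A : Type*} {q0 : A} (c : Conf n A q0) : H n A q0 :=
  letI : DecidableEq (Conf n A q0) := Classical.decEq _
  lp.single 2 c 1

/-- Translation of a configuration by `z`: the configuration `x ↦ c (x + z)`. -/
def shiftConf {n : ℕ} {A : Type*} {q0 : A} (z : Lat n) (c : Conf n A q0) : Conf n A q0 :=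
  ⟨fun x => c.1 (x + z), by
    have h : {x : Lat n | c.1 (x + z) ≠ q0} ⊆ (fun x : Lat n => x + z) ⁻¹' {x | c.1 x ≠ q0} :=
      fun x hx => hx
    exact (c.2.preimage ((add_left_injective z).injOn)).subset h⟩

/-- Translation by `z` as a permutation of the set of finite configurations. -/
def shiftEquiv {n : ℕ} {A : Type*} (q0 : A) (z : Lat n) : Conf n A q0 ≃ Conf n A q0 where
  toFun := shiftConf z
  invFun := shiftConf (-z)
  left_inv c := Subtype.ext (funext fun x => by
    show c.1 (x + -z + z) = c.1 x
    rw [neg_add_cancel_right])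
  right_inv c := Subtype.ext (funext fun x => by
    show c.1 (x + z + -z) = c.1 x
    rw [add_neg_cancel_right])

theorem memℓp_comp_equiv {ι κ : Type*} (e : κ ≃ ι) {f : ι → ℂ} (hf : Memℓp f 2) :
    Memℓp (fun k => f (e k)) 2 := by
  have hp : 0 < (2 : ℝ≥0∞).toReal := by norm_num
  exact memℓp_gen ((e.summable_iff
    (f := fun i => ‖f i‖ ^ (2 : ℝ≥0∞).toReal)).mpr (hf.summable hp))

/-- The unitary operator on `ℓ²` induced by a permutation of the index set. -/
def lpCongr {ι κ : Type*} (e : ι ≃ κ) :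
    lp (fun _ : ι => ℂ) 2 ≃ₗᵢ[ℂ] lp (fun _ : κ => ℂ) 2 where
  toLinearEquiv :=
    { toFun := fun f => ⟨fun k => f (e.symm k), memℓp_comp_equiv e.symm (lp.memℓp f)⟩
      map_add' := fun f g => lp.ext (funext fun k => by
        simp [lp.coeFn_add]; rfl)
      map_smul' := fun r f => lp.ext (funext fun k => by
        simp [lp.coeFn_smul])
      invFun := fun g => ⟨fun i => g (e i), memℓp_comp_equiv e (lp.memℓp g)⟩
      left_inv := fun f => lp.ext (funext fun i => by simp)
      right_inv := fun g => lp.ext (funext fun k => by simp) }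
  norm_map' := fun f => by
    have hp : 0 < (2 : ℝ≥0∞).toReal := by norm_num
    rw [lp.norm_eq_tsum_rpow hp, lp.norm_eq_tsum_rpow hp]
    congr 1
    exact e.symm.tsum_eq (fun i => ‖f i‖ ^ (2 : ℝ≥0∞).toReal)

/-- The translation operator `τ_z` on the Hilbert space of finite configurations. -/
def tau {n : ℕ} {A : Type*} (q0 : A) (z : Lat n) : H n A q0 ≃ₗᵢ[ℂ] H n A q0 :=
  lpCongr (shiftEquiv q0 z)

/-- A bounded operator on `H` is translation invariant if `τ_z ∘ M ∘ τ_z⁻¹ = M` for all `z`. -/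
def TranslationInvariant {n : ℕ} {A : Type*} (q0 : A) (M : H n A q0 →L[ℂ] H n A q0) : Prop :=
  ∀ (z : Lat n) (v : H n A q0), tau q0 z (M ((tau q0 z).symm v)) = M v


section Local

variable {n : ℕ} {A : Type*} [Fintype A]

/-- The configuration agreeing with `f` on `D` and with `c` outside `D`. -/
def override {q0 : A} (D : Finset (Lat n)) (f : {x // x ∈ D} → A) (c : Conf n A q0) :
    Conf n A q0 :=
  ⟨fun x => if h : x ∈ D then f ⟨x, h⟩ else c.1 x, by
    refine Set.Finite.subset (Set.Finite.union D.finite_toSet c.2) ?_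
    intro x hx
    rcases Decidable.em (x ∈ D) with h | h
    · exact Set.mem_union_left _ h
    · exact Set.mem_union_right _ (by simpa [h] using hx)⟩

/-- A bounded operator on the Hilbert space of finite configurations is local upon the finite
set `D` of cells if its action on basis vectors only modifies, and only reads, the cells in `D`. -/
def IsLocalUpon (q0 : A) (D : Finset (Lat n)) (T : H n A q0 →L[ℂ] H n A q0) : Prop :=
  ∃ a : ({x // x ∈ D} → A) → ({x // x ∈ D} → A) → ℂ, ∀ c : Conf n A q0,
    T (eVec c) = ∑ f : {x // x ∈ D} → A,
      a f (fun x => c.1 x.1) • eVec (override D f c)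

/-- The neighborhood of the cell `x`: `𝒩_x = {x + k : k ∈ 𝒩}`. -/
def nbhd {n : ℕ} (𝒩 : Finset (Lat n)) (x : Lat n) : Finset (Lat n) :=
  𝒩.image (fun k => x + k)

/-- The reflected neighborhood of the cell `x`: `𝒱_x = {x - k : k ∈ 𝒩}`. -/
def rnbhd {n : ℕ} (𝒩 : Finset (Lat n)) (x : Lat n) : Finset (Lat n) :=
  𝒩.image (fun k => x - k)

/-- A unitary `M` is causal relative to the neighborhood `𝒩` if conjugation `M† A M` maps
operators local upon a cell `x` to operators local upon `𝒩_x`. -/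
def Causal (q0 : A) (𝒩 : Finset (Lat n)) (M : H n A q0 →L[ℂ] H n A q0) : Prop :=
  ∀ (x : Lat n) (B : H n A q0 →L[ℂ] H n A q0), IsLocalUpon q0 {x} B →
    IsLocalUpon q0 (nbhd 𝒩 x) (ContinuousLinearMap.adjoint M ∘L B ∘L M)

end Local

/-- The standard basis vector of the one-cell Hilbert space `ℂ^A`. -/
def wVec (A : Type*) [Fintype A] (a : A) : EuclideanSpace ℂ A :=
  letI : DecidableEq A := Classical.decEq A
  EuclideanSpace.single a 1

/-- The configuration obtained from `c` by replacing the value at the cell `x` by `r`. -/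
def updateConf {n : ℕ} {A : Type*} {q0 : A} (x : Lat n) (r : A) (c : Conf n A q0) :
    Conf n A q0 :=
  ⟨Function.update c.1 x r, by
    refine Set.Finite.subset (c.2.union (Set.finite_singleton x)) ?_
    intro y hy
    rcases eq_or_ne y x with rfl | hxy
    · exact Set.mem_union_right _ rfl
    · exact Set.mem_union_left _ (by
        simpa [Function.update_of_ne hxy] using hy)⟩

/-- The subalgebra `𝔇_{y,x}` of `End(ℂ^A)`: endomorphisms `a` of the one-cell Hilbert space
such that the operator `ι_x(a)` local upon `{x}` implementing `a` at the cell `x` is of the form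
`R† B R` for some operator `B` local upon `{x - y}`. -/
def Dset {n : ℕ} {A : Type*} [Fintype A] (q0 : A)
    (R : H n A q0 →L[ℂ] H n A q0) (y x : Lat n) :
    Set (Module.End ℂ (EuclideanSpace ℂ A)) :=
  {a | ∃ B : H n A q0 →L[ℂ] H n A q0, IsLocalUpon q0 {x - y} B ∧
    ∀ c : Conf n A q0,
      (ContinuousLinearMap.adjoint R ∘L B ∘L R) (eVec c) =
        ∑ q : A, (inner ℂ (wVec A q) (a (wVec A (c.1 x))) : ℂ) • eVec (updateConf x q c)}



section Component

variable {n : ℕ} {𝒩 : Finset (Lat n)} {K : {z // z ∈ 𝒩} → Type*}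

/-- The propagation map on configurations in component form:
`(s c) x z = (c (x + z)) z`. -/
def sConf (qz : ∀ z : {z // z ∈ 𝒩}, K z) (c : Conf n (∀ z : {z // z ∈ 𝒩}, K z) qz) :
    Conf n (∀ z : {z // z ∈ 𝒩}, K z) qz :=
  ⟨fun x z => c.1 (x + z.1) z, by
    refine Set.Finite.subset
      (Set.finite_iUnion (fun z : {z // z ∈ 𝒩} =>
        (c.2.preimage ((add_left_injective z.1).injOn)))) ?_
    intro x hx
    obtain ⟨z, hz⟩ := Function.ne_iff.mp hx
    exact Set.mem_iUnion.2 ⟨z, fun h => hz (congrFun h z)⟩⟩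

end Component

/-- The support of a finite configuration, as a `Finset`. -/
def suppF {n : ℕ} {A : Type*} {q0 : A} (c : Conf n A q0) : Finset (Lat n) :=
  c.2.toFinset

/-- The property characterizing the local isomorphism `S̃ : H → Ĥ` induced by a one-cell
unitary `S : W → Ŵ`. -/
def StildeProp {n : ℕ} {A B : Type*} [Fintype A] [Fintype B] (q0 : A) (qh : B)
    (Slin : EuclideanSpace ℂ A ≃ₗᵢ[ℂ] EuclideanSpace ℂ B)
    (St : H n A q0 ≃ₗᵢ[ℂ] H n B qh) : Prop :=
  ∀ c : Conf n A q0,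
    St (eVec c) = ∑ g : {x // x ∈ suppF c} → B,
      (∏ x : {x // x ∈ suppF c}, (inner ℂ (wVec B (g x)) (Slin (wVec A (c.1 x.1))) : ℂ)) •
        eVec (override (suppF c) g (c0 n B qh))

/-- An endomorphism of the one-cell Hilbert space `ℂ^P`, `P = Π_{z ∈ 𝒩} K z`, acting only on
the `y`-th coordinate. -/
def ActsOnCoord {n : ℕ} {𝒩 : Finset (Lat n)} {K : {z // z ∈ 𝒩} → Type*}
    [∀ z, Fintype (K z)] (y : {z // z ∈ 𝒩})
    (Aop : Module.End ℂ (EuclideanSpace ℂ (∀ z : {z // z ∈ 𝒩}, K z))) : Prop :=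
  ∃ f : K y → K y → ℂ, ∀ p p' : ∀ z : {z // z ∈ 𝒩}, K z,
    ((∀ z : {z // z ∈ 𝒩}, z ≠ y → p z = p' z) →
      (inner ℂ (wVec _ p) (Aop (wVec _ p')) : ℂ) = f (p y) (p' y)) ∧
    (¬ (∀ z : {z // z ∈ 𝒩}, z ≠ y → p z = p' z) →
      (inner ℂ (wVec _ p) (Aop (wVec _ p')) : ℂ) = 0)

/-- A factorization of the module `W` as a tensor product `⨂_{k} V k` carrying the sets of
endomorphisms `Dsets k` onto the endomorphisms acting on the `k`-th tensor factor alone. -/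
structure PiTensorFactorization (ι : Type) [Fintype ι] [DecidableEq ι]
    (W : Type*) [AddCommGroup W] [Module ℂ W]
    (Dsets : ι → Set (Module.End ℂ W)) : Type _ where
  /-- The tensor factors. -/
  V : ι → Type
  [grp : ∀ k, AddCommGroup (V k)]
  [mod : ∀ k, Module ℂ (V k)]
  fin : ∀ k, FiniteDimensional ℂ (V k)
  /-- The linear isomorphism with the tensor product. -/
  S : W ≃ₗ[ℂ] PiTensorProduct ℂ V
  cond : ∀ y : ι,
    (fun a : Module.End ℂ W => S.conj a) '' (Dsets y) =
      Set.range (fun f : Module.End ℂ (V y) =>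
        (PiTensorProduct.map
          (Function.update (fun k => (LinearMap.id : V k →ₗ[ℂ] V k)) y f) :
            Module.End ℂ (PiTensorProduct ℂ V)))

/-- The continuous linear map underlying a linear isometry equivalence. -/
def isomCLM {E F : Type*} [NormedAddCommGroup E] [NormedAddCommGroup F]
    [NormedSpace ℂ E] [NormedSpace ℂ F] (e : E ≃ₗᵢ[ℂ] F) : E →L[ℂ] F :=
  e.toLinearIsometry.toContinuousLinearMap


set_option linter.unusedSectionVars false
section Aux

variable {n : ℕ} {Q : Type} [Fintype Q] {q₀ : Q}

/-- Restriction of a configuration to a finite window `D`. -/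
def restr (D : Finset (Lat n)) (c : Conf n Q q₀) : {x // x ∈ D} → Q :=
  fun x => c.1 x.1

@[simp] lemma restr_override (D : Finset (Lat n)) (f : {x // x ∈ D} → Q) (c : Conf n Q q₀) :
    restr D (override D f c) = f := by
  funext x
  simp [restr, override, x.2]

@[simp] lemma override_override (D : Finset (Lat n)) (f g : {x // x ∈ D} → Q)
    (c : Conf n Q q₀) : override D f (override D g c) = override D f c := by
  apply Subtype.ext; funext x
  by_cases h : x ∈ D <;> simp [override, h]

@[simp] lemma override_restr (D : Finset (Lat n)) (c : Conf n Q q₀) :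
    override D (restr D c) c = c := by
  apply Subtype.ext; funext x
  by_cases h : x ∈ D <;> simp [override, restr, h]

lemma override_val_mem (D : Finset (Lat n)) (f : {x // x ∈ D} → Q) (c : Conf n Q q₀)
    {x : Lat n} (h : x ∈ D) : (override D f c).1 x = f ⟨x, h⟩ := by
  simp [override, h]

lemma override_val_not_mem (D : Finset (Lat n)) (f : {x // x ∈ D} → Q) (c : Conf n Q q₀)
    {x : Lat n} (h : x ∉ D) : (override D f c).1 x = c.1 x := by
  simp [override, h]

lemma override_injective (D : Finset (Lat n)) (c : Conf n Q q₀) :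
    Function.Injective (fun f : {x // x ∈ D} → Q => override D f c) := fun f g h => by
  have := congrArg (restr D) h
  simpa using this

end Aux
set_option linter.unusedSectionVars false
open scoped NNReal

section Aux2

variable {ι : Type*}

lemma rpow_two' (x : ℝ) : x ^ ((2 : ℝ≥0∞)).toReal = x ^ (2 : ℕ) := by
  rw [show ((2:ℝ≥0∞)).toReal = ((2:ℕ):ℝ) by norm_num, Real.rpow_natCast]

open scoped Classical in
lemma eVec_apply {n : ℕ} {Q : Type} {q₀ : Q} (c c' : Conf n Q q₀) :
    (eVec c : Conf n Q q₀ → ℂ) c' = if c' = c then 1 else 0 := by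
  unfold eVec
  rw [lp.single_apply]
  by_cases h : c' = c
  · simp [h]
  · simp [h]

lemma orthonormal_eVec {n : ℕ} {Q : Type} {q₀ : Q} :
    Orthonormal ℂ (eVec : Conf n Q q₀ → H n Q q₀) := by
  classical
  rw [orthonormal_iff_ite]
  intro c c'
  unfold eVec
  rw [lp.inner_single_left, lp.single_apply]
  by_cases h : c = c'
  · simp [h]
  · simp [h, fun hh : c' = c => h hh.symm]

/-- Membership in `ℓ²` from finiteness of the `ℝ≥0∞`-valued sum of squares. -/
lemma memℓp_two_of_tsum_ne_top (f : ι → ℂ)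
    (h : (∑' i, ((‖f i‖₊ : ℝ≥0∞) ^ 2)) ≠ ⊤) : Memℓp f 2 := by
  apply memℓp_gen
  have h2 : (∑' i, (((‖f i‖₊ ^ 2 : ℝ≥0)) : ℝ≥0∞)) ≠ ⊤ := by
    have he : (fun i => (((‖f i‖₊ ^ 2 : ℝ≥0)) : ℝ≥0∞)) = fun i => (‖f i‖₊ : ℝ≥0∞) ^ 2 := by
      funext i; push_cast; ring
    rw [he]; exact h
  have hs : Summable (fun i => (‖f i‖₊ ^ 2 : ℝ≥0)) :=
    ENNReal.tsum_coe_ne_top_iff_summable.mp h2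
  have hs' : Summable (fun i => ((‖f i‖₊ ^ 2 : ℝ≥0) : ℝ)) := NNReal.summable_coe.mpr hs
  have he2 : (fun i => ‖f i‖ ^ ((2:ℝ≥0∞)).toReal) = fun i => ((‖f i‖₊ ^ 2 : ℝ≥0) : ℝ) := by
    funext i; rw [rpow_two']; push_cast; ring
  rw [he2]; exact hs'

lemma tsum_sq_eq_norm_sq (f : lp (fun _ : ι => ℂ) 2) :
    (∑' i, ((‖(f : ι → ℂ) i‖₊ : ℝ≥0∞) ^ 2)) = ENNReal.ofReal (‖f‖ ^ 2) := by
  have hp : 0 < (2 : ℝ≥0∞).toReal := by norm_num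
  have hnorm := lp.norm_rpow_eq_tsum hp f
  have hsum : Summable (fun i => ‖(f : ι → ℂ) i‖ ^ ((2:ℝ≥0∞)).toReal) :=
    (lp.memℓp f).summable hp
  calc (∑' i, ((‖(f : ι → ℂ) i‖₊ : ℝ≥0∞) ^ 2))
      = ∑' i, ENNReal.ofReal (‖(f : ι → ℂ) i‖ ^ ((2:ℝ≥0∞)).toReal) := by
        congr 1; funext i
        rw [rpow_two', ENNReal.ofReal_pow (norm_nonneg _),
          ofReal_norm, enorm_eq_nnnorm]
    _ = ENNReal.ofReal (∑' i, ‖(f : ι → ℂ) i‖ ^ ((2:ℝ≥0∞)).toReal) := by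
        rw [ENNReal.ofReal_tsum_of_nonneg
          (fun i => Real.rpow_nonneg (norm_nonneg _) _) hsum]
    _ = ENNReal.ofReal (‖f‖ ^ 2) := by
        rw [← hnorm, rpow_two']

/-- Norm monotonicity in `ℓ²` from coordinatewise domination. -/
lemma lp_norm_mono {f g : lp (fun _ : ι => ℂ) 2}
    (h : ∀ i, ‖(f : ι → ℂ) i‖ ≤ ‖(g : ι → ℂ) i‖) : ‖f‖ ≤ ‖g‖ := by
  have hf := tsum_sq_eq_norm_sq f
  have hg := tsum_sq_eq_norm_sq g
  have hle : (∑' i, ((‖(f : ι → ℂ) i‖₊ : ℝ≥0∞) ^ 2)) ≤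
      (∑' i, ((‖(g : ι → ℂ) i‖₊ : ℝ≥0∞) ^ 2)) := by
    apply ENNReal.tsum_le_tsum
    intro i
    gcongr
    exact_mod_cast h i
  rw [hf, hg] at hle
  have h2 := (ENNReal.ofReal_le_ofReal_iff (by positivity)).mp hle
  have h3 := Real.sqrt_le_sqrt h2
  rwa [Real.sqrt_sq (norm_nonneg _), Real.sqrt_sq (norm_nonneg _)] at h3

end Aux2
section Aux3
set_option linter.unusedSectionVars false
open scoped NNReal

variable {n : ℕ} {Q : Type} [Fintype Q] {q₀ : Q}

/-- Configurations quiescent on `D`. -/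
def OutC (D : Finset (Lat n)) (Q : Type) (q₀ : Q) : Type :=
  {o : Conf n Q q₀ // ∀ x ∈ D, o.1 x = q₀}

variable (Q q₀) in

/-- Splitting a configuration into its pattern on `D` and its part outside `D`. -/
def splitEquiv (D : Finset (Lat n)) :
    Conf n Q q₀ ≃ ({x // x ∈ D} → Q) × OutC D Q q₀ where
  toFun c := (restr D c, ⟨override D (fun _ => q₀) c, fun x hx => override_val_mem D _ c hx⟩)
  invFun p := override D p.1 p.2.1
  left_inv c := by
    show override D (restr D c) (override D (fun _ => q₀) c) = c
    rw [override_override, override_restr]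
  right_inv p := by
    refine Prod.ext ?_ ?_
    · show restr D (override D p.1 p.2.1) = p.1
      simp
    · show Subtype.mk (override D (fun _ => q₀) (override D p.1 p.2.1)) _ = p.2
      apply Subtype.ext
      show override D (fun _ => q₀) (override D p.1 p.2.1) = p.2.1
      rw [override_override]
      apply Subtype.ext; funext x
      by_cases h : x ∈ D
      · rw [override_val_mem D _ _ h, (p.2.2 x h)]
      · rw [override_val_not_mem D _ _ h]

variable (D : Finset (Lat n)) (a : ({x // x ∈ D} → Q) → ({x // x ∈ D} → Q) → ℂ)

/-- The raw action of the operator associated with the local rule `a`. -/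
def Tfun (ψ : Conf n Q q₀ → ℂ) : Conf n Q q₀ → ℂ :=
  fun c' => ∑ g : {x // x ∈ D} → Q, a (restr D c') g * ψ (override D g c')

lemma Tfun_override (ψ : Conf n Q q₀ → ℂ) (f : {x // x ∈ D} → Q) (o : Conf n Q q₀) :
    Tfun D a ψ (override D f o) =
      ∑ g : {x // x ∈ D} → Q, a f g * ψ (override D g o) := by
  unfold Tfun
  rw [restr_override]
  congr 1; funext g
  rw [override_override]

variable {C : ℝ}

lemma Tfun_tsum_le
    (hbound : ∀ u : ({x // x ∈ D} → Q) → ℂ,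
      ∑ f : {x // x ∈ D} → Q, ‖∑ g : {x // x ∈ D} → Q, a f g * u g‖ ^ 2 ≤
        C ^ 2 * ∑ g : {x // x ∈ D} → Q, ‖u g‖ ^ 2)
    (ψ : Conf n Q q₀ → ℂ) :
    (∑' c', ((‖Tfun D a ψ c'‖₊ : ℝ≥0∞) ^ 2)) ≤
      ENNReal.ofReal (C ^ 2) * ∑' c, ((‖ψ c‖₊ : ℝ≥0∞) ^ 2) := by
  classical
  have key : ∀ F : Conf n Q q₀ → ℝ≥0∞,
      ∑' c, F c = ∑' p : ({x // x ∈ D} → Q) × OutC D Q q₀, F ((splitEquiv Q q₀ D).symm p) :=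
    fun F => ((splitEquiv Q q₀ D).symm.tsum_eq F).symm
  rw [key, key]
  have hsymm : ∀ p : ({x // x ∈ D} → Q) × OutC D Q q₀,
      (splitEquiv Q q₀ D).symm p = override D p.1 p.2.1 := fun p => rfl
  calc
    (∑' p : ({x // x ∈ D} → Q) × OutC D Q q₀,
        ((‖Tfun D a ψ ((splitEquiv Q q₀ D).symm p)‖₊ : ℝ≥0∞) ^ 2))
      = ∑' (f : {x // x ∈ D} → Q) (o : OutC D Q q₀),
          ((‖∑ g : {x // x ∈ D} → Q, a f g * ψ (override D g o.1)‖₊ : ℝ≥0∞) ^ 2) := by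
        rw [ENNReal.tsum_prod']
        congr 1; funext f; congr 1; funext o
        rw [hsymm, Tfun_override]
    _ = ∑' (o : OutC D Q q₀), ∑ f : {x // x ∈ D} → Q,
          ((‖∑ g : {x // x ∈ D} → Q, a f g * ψ (override D g o.1)‖₊ : ℝ≥0∞) ^ 2) := by
        rw [ENNReal.tsum_comm]
        congr 1; funext o
        exact tsum_fintype _
    _ ≤ ∑' (o : OutC D Q q₀), ENNReal.ofReal (C ^ 2) * ∑ g : {x // x ∈ D} → Q,
          ((‖ψ (override D g o.1)‖₊ : ℝ≥0∞) ^ 2) := by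
        apply ENNReal.tsum_le_tsum
        intro o
        have hb := hbound (fun g => ψ (override D g o.1))
        have lhs_eq : ∑ f : {x // x ∈ D} → Q,
            ((‖∑ g : {x // x ∈ D} → Q, a f g * ψ (override D g o.1)‖₊ : ℝ≥0∞) ^ 2) =
            ENNReal.ofReal (∑ f : {x // x ∈ D} → Q,
              ‖∑ g : {x // x ∈ D} → Q, a f g * ψ (override D g o.1)‖ ^ 2) := by
          rw [ENNReal.ofReal_sum_of_nonneg (fun _ _ => by positivity)]
          congr 1; funext f
          rw [ENNReal.ofReal_pow (norm_nonneg _), ofReal_norm, enorm_eq_nnnorm]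
        have rhs_eq : ENNReal.ofReal (C ^ 2) * ∑ g : {x // x ∈ D} → Q,
            ((‖ψ (override D g o.1)‖₊ : ℝ≥0∞) ^ 2) =
            ENNReal.ofReal (C ^ 2 * ∑ g : {x // x ∈ D} → Q, ‖ψ (override D g o.1)‖ ^ 2) := by
          rw [ENNReal.ofReal_mul (by positivity),
            ENNReal.ofReal_sum_of_nonneg (fun _ _ => by positivity)]
          congr 1; congr 1; funext g
          rw [ENNReal.ofReal_pow (norm_nonneg _), ofReal_norm, enorm_eq_nnnorm]
        rw [lhs_eq, rhs_eq]
        exact ENNReal.ofReal_le_ofReal hb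
    _ = ENNReal.ofReal (C ^ 2) * ∑' (g : {x // x ∈ D} → Q) (o : OutC D Q q₀),
          ((‖ψ (override D g o.1)‖₊ : ℝ≥0∞) ^ 2) := by
        rw [ENNReal.tsum_mul_left]
        congr 1
        rw [ENNReal.tsum_comm]
        congr 1; funext o
        exact (tsum_fintype _).symm
    _ = ENNReal.ofReal (C ^ 2) * ∑' p : ({x // x ∈ D} → Q) × OutC D Q q₀,
          ((‖ψ ((splitEquiv Q q₀ D).symm p)‖₊ : ℝ≥0∞) ^ 2) := by
        rw [ENNReal.tsum_prod']
        rfl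

end Aux3
section Aux4
set_option linter.unusedSectionVars false
open scoped NNReal

variable {n : ℕ} {Q : Type} [Fintype Q] {q₀ : Q}
variable (D : Finset (Lat n)) (a : ({x // x ∈ D} → Q) → ({x // x ∈ D} → Q) → ℂ) {C : ℝ}

/-- The local-rule bound hypothesis. -/
def RuleBound (C : ℝ) : Prop :=
  ∀ u : ({x // x ∈ D} → Q) → ℂ,
    ∑ f : {x // x ∈ D} → Q, ‖∑ g : {x // x ∈ D} → Q, a f g * u g‖ ^ 2 ≤
      C ^ 2 * ∑ g : {x // x ∈ D} → Q, ‖u g‖ ^ 2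

lemma memℓp_Tfun (hbound : RuleBound D a C) (ψ : H n Q q₀) :
    Memℓp (Tfun D a (ψ : Conf n Q q₀ → ℂ)) 2 := by
  apply memℓp_two_of_tsum_ne_top
  refine ne_top_of_le_ne_top ?_ (Tfun_tsum_le D a hbound (ψ : Conf n Q q₀ → ℂ))
  rw [tsum_sq_eq_norm_sq ψ]
  exact ENNReal.mul_ne_top ENNReal.ofReal_ne_top ENNReal.ofReal_ne_top

/-- The linear map underlying the local operator with rule `a`. -/
def Tlin (hbound : RuleBound D a C) : H n Q q₀ →ₗ[ℂ] H n Q q₀ where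
  toFun ψ := ⟨Tfun D a (ψ : Conf n Q q₀ → ℂ), memℓp_Tfun D a hbound ψ⟩
  map_add' ψ φ := by
    apply lp.ext
    funext c'
    show Tfun D a ((ψ + φ : H n Q q₀) : Conf n Q q₀ → ℂ) c' = _
    rw [lp.coeFn_add]
    show (∑ g, a (restr D c') g * ((ψ : Conf n Q q₀ → ℂ) (override D g c')
        + (φ : Conf n Q q₀ → ℂ) (override D g c'))) = _
    rw [show ∀ x y : lp (fun _ : Conf n Q q₀ => ℂ) 2, (↑(x + y) : Conf n Q q₀ → ℂ) = ↑x + ↑y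
      from fun x y => lp.coeFn_add x y]
    simp only [Pi.add_apply]
    show _ = Tfun D a (ψ : Conf n Q q₀ → ℂ) c' + Tfun D a (φ : Conf n Q q₀ → ℂ) c'
    unfold Tfun
    rw [← Finset.sum_add_distrib]
    congr 1; funext g; ring
  map_smul' r ψ := by
    apply lp.ext
    funext c'
    show Tfun D a ((r • ψ : H n Q q₀) : Conf n Q q₀ → ℂ) c' = _
    rw [show (↑(r • ψ) : Conf n Q q₀ → ℂ) = r • ↑ψ from lp.coeFn_smul r ψ]
    show (∑ g, a (restr D c') g * (r • (ψ : Conf n Q q₀ → ℂ)) (override D g c')) = _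
    simp only [Pi.smul_apply, smul_eq_mul, RingHom.id_apply]
    show _ = (r • (⟨Tfun D a (ψ : Conf n Q q₀ → ℂ), memℓp_Tfun D a hbound ψ⟩ :
      lp (fun _ : Conf n Q q₀ => ℂ) 2)) c'
    rw [lp.coeFn_smul]
    show _ = r * Tfun D a (ψ : Conf n Q q₀ → ℂ) c'
    unfold Tfun
    rw [Finset.mul_sum]
    congr 1; funext g; ring

lemma Tlin_norm_le (hC : 0 ≤ C) (hbound : RuleBound D a C) (ψ : H n Q q₀) :
    ‖Tlin D a hbound ψ‖ ≤ C * ‖ψ‖ := by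
  have h1 := Tfun_tsum_le D a hbound (ψ : Conf n Q q₀ → ℂ)
  have h2 : (∑' c', ((‖Tfun D a (ψ : Conf n Q q₀ → ℂ) c'‖₊ : ℝ≥0∞) ^ 2)) =
      ENNReal.ofReal (‖Tlin D a hbound ψ‖ ^ 2) := tsum_sq_eq_norm_sq (Tlin D a hbound ψ)
  rw [h2, tsum_sq_eq_norm_sq ψ, ← ENNReal.ofReal_mul (by positivity)] at h1
  have h3 := (ENNReal.ofReal_le_ofReal_iff (by positivity)).mp h1
  have h4 : C ^ 2 * ‖ψ‖ ^ 2 = (C * ‖ψ‖) ^ 2 := by ring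
  rw [h4] at h3
  have h5 := Real.sqrt_le_sqrt h3
  rwa [Real.sqrt_sq (norm_nonneg _), Real.sqrt_sq (by positivity)] at h5

/-- The local operator with rule `a`, as a continuous linear map. -/
def Top (hC : 0 ≤ C) (hbound : RuleBound D a C) : H n Q q₀ →L[ℂ] H n Q q₀ :=
  LinearMap.mkContinuous (Tlin D a hbound) C (Tlin_norm_le D a hC hbound)

lemma Top_norm_le (hC : 0 ≤ C) (hbound : RuleBound D a C) (ψ : H n Q q₀) :
    ‖Top D a hC hbound ψ‖ ≤ C * ‖ψ‖ := Tlin_norm_le D a hC hbound ψ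

lemma Top_apply_coe (hC : 0 ≤ C) (hbound : RuleBound D a C) (ψ : H n Q q₀) :
    ((Top D a hC hbound ψ : H n Q q₀) : Conf n Q q₀ → ℂ) =
      Tfun D a (ψ : Conf n Q q₀ → ℂ) := rfl

-- two key combinatorial equivalences for locality
lemma override_cond_iff (c c' : Conf n Q q₀) (g : {x // x ∈ D} → Q) :
    override D g c' = c ↔ (g = restr D c ∧ c' = override D (restr D c') c) := by
  constructor
  · intro h
    constructor
    · rw [← h]; simp
    · apply Subtype.ext; funext x
      by_cases hx : x ∈ D
      · rw [override_val_mem D _ _ hx]; rfl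
      · rw [override_val_not_mem D _ _ hx, ← h, override_val_not_mem D _ _ hx]
  · rintro ⟨rfl, h2⟩
    conv_lhs => rw [h2]
    rw [override_override, override_restr]

lemma eq_override_cond_iff (c c' : Conf n Q q₀) (f : {x // x ∈ D} → Q) :
    c' = override D f c ↔ (f = restr D c' ∧ c' = override D (restr D c') c) := by
  constructor
  · intro h
    have hf : f = restr D c' := by rw [h]; simp
    refine ⟨hf, ?_⟩
    rw [← hf]
    exact h
  · rintro ⟨rfl, h2⟩
    exact h2

lemma Top_apply_eVec (hC : 0 ≤ C) (hbound : RuleBound D a C) (c : Conf n Q q₀) :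
    Top D a hC hbound (eVec c) = ∑ f : {x // x ∈ D} → Q,
      a f (fun x => c.1 x.1) • eVec (override D f c) := by
  classical
  apply lp.ext
  funext c'
  rw [Top_apply_coe]
  have lhs_eq : Tfun D a ((eVec c : H n Q q₀) : Conf n Q q₀ → ℂ) c' =
      ∑ g : {x // x ∈ D} → Q, a (restr D c') g * (if override D g c' = c then 1 else 0) := by
    unfold Tfun
    congr 1; funext g
    rw [eVec_apply]
  have rhs_eq : ((∑ f : {x // x ∈ D} → Q,
        a f (fun x => c.1 x.1) • eVec (override D f c) : H n Q q₀) : Conf n Q q₀ → ℂ) c' =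
      ∑ f : {x // x ∈ D} → Q,
        a f (restr D c) * (if c' = override D f c then 1 else 0) := by
    rw [lp.coeFn_sum, Finset.sum_apply]
    congr 1; funext f
    rw [lp.coeFn_smul, Pi.smul_apply, eVec_apply, smul_eq_mul]
    rfl
  rw [lhs_eq, rhs_eq]
  by_cases hP : c' = override D (restr D c') c
  · have e1 : ∀ g, (override D g c' = c) ↔ (g = restr D c) := by
      intro g
      rw [override_cond_iff]
      exact ⟨fun h => h.1, fun h => ⟨h, hP⟩⟩
    have e2 : ∀ f, (c' = override D f c) ↔ (f = restr D c') := by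
      intro f
      rw [eq_override_cond_iff]
      exact ⟨fun h => h.1, fun h => ⟨h, hP⟩⟩
    simp only [e1, e2, mul_ite, mul_one, mul_zero]
    rw [Finset.sum_ite_eq' Finset.univ (restr D c) (fun g => a (restr D c') g),
      Finset.sum_ite_eq' Finset.univ (restr D c') (fun f => a f (restr D c))]
    simp
  · have e1 : ∀ g, ¬ (override D g c' = c) := fun g h => hP ((override_cond_iff D c c' g).mp h).2
    have e2 : ∀ f, ¬ (c' = override D f c) :=
      fun f h => hP ((eq_override_cond_iff D c c' f).mp h).2
    simp only [e1, e2, if_false, mul_zero, Finset.sum_const_zero]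

lemma Top_isLocal (hC : 0 ≤ C) (hbound : RuleBound D a C) :
    IsLocalUpon q₀ D (Top D a hC hbound) :=
  ⟨a, Top_apply_eVec D a hC hbound⟩

lemma single_eq_smul_eVec {inst : DecidableEq (Conf n Q q₀)} (c : Conf n Q q₀) (z : ℂ) :
    (lp.single (E := fun _ : Conf n Q q₀ => ℂ) 2 c z : H n Q q₀) = z • eVec c := by
  apply lp.ext
  funext c'
  rw [lp.single_apply, lp.coeFn_smul, Pi.smul_apply, eVec_apply]
  by_cases h : c' = c <;> simp [h]

end Aux4
section Aux5
set_option linter.unusedSectionVars false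
open scoped NNReal ComplexConjugate

variable {n : ℕ} {Q : Type} [Fintype Q] {q₀ : Q}
variable (D : Finset (Lat n))

/-- The matrix elements of `A` between configurations supported inside `D`. -/
def ruleOf (A : H n Q q₀ →L[ℂ] H n Q q₀) :
    ({x // x ∈ D} → Q) → ({x // x ∈ D} → Q) → ℂ :=
  fun f g => (inner ℂ (eVec (override D f (c0 n Q q₀)))
    (A (eVec (override D g (c0 n Q q₀)))) : ℂ)

lemma ruleOf_bound (A : H n Q q₀ →L[ℂ] H n Q q₀) : RuleBound D (ruleOf D A) ‖A‖ := by
  intro u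
  classical
  set w : ({x // x ∈ D} → Q) → H n Q q₀ := fun f => eVec (override D f (c0 n Q q₀)) with hw
  have hwo : Orthonormal ℂ w :=
    (orthonormal_eVec (n := n) (Q := Q) (q₀ := q₀)).comp _ (override_injective D (c0 n Q q₀))
  set φ : H n Q q₀ := ∑ g : {x // x ∈ D} → Q, u g • w g with hφ
  have hterm : ∀ f, (∑ g : {x // x ∈ D} → Q, ruleOf D A f g * u g) =
      (inner ℂ (w f) (A φ) : ℂ) := by
    intro f
    rw [hφ, map_sum, inner_sum]
    congr 1; funext g
    rw [map_smul, inner_smul_right]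
    unfold ruleOf
    ring
  have hφnorm : ‖φ‖ ^ 2 = ∑ g : {x // x ∈ D} → Q, ‖u g‖ ^ 2 := by
    have h1 := hwo.inner_sum u u Finset.univ
    have h2 : (‖φ‖ : ℝ) ^ 2 = RCLike.re (inner ℂ φ φ : ℂ) := (inner_self_eq_norm_sq φ).symm
    rw [h2, hφ, h1]
    rw [map_sum]
    congr 1; funext g
    rw [RCLike.conj_mul]
    norm_cast
  calc ∑ f : {x // x ∈ D} → Q, ‖∑ g : {x // x ∈ D} → Q, ruleOf D A f g * u g‖ ^ 2
      = ∑ f : {x // x ∈ D} → Q, ‖(inner ℂ (w f) (A φ) : ℂ)‖ ^ 2 := by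
        congr 1; funext f; rw [hterm]
    _ ≤ ‖A φ‖ ^ 2 := hwo.sum_inner_products_le (A φ)
    _ ≤ (‖A‖ * ‖φ‖) ^ 2 := by
        have := A.le_opNorm φ
        have h0 : (0:ℝ) ≤ ‖A φ‖ := norm_nonneg _
        nlinarith
    _ = ‖A‖ ^ 2 * ∑ g : {x // x ∈ D} → Q, ‖u g‖ ^ 2 := by
        rw [mul_pow, hφnorm]

end Aux5
section Aux6
set_option linter.unusedSectionVars false
open scoped NNReal

variable {n : ℕ} {Q : Type} [Fintype Q] {q₀ : Q}
variable (D : Finset (Lat n))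

lemma mem_suppF {c : Conf n Q q₀} {x : Lat n} : x ∈ suppF c ↔ c.1 x ≠ q₀ :=
  Set.Finite.mem_toFinset _

lemma eq_override_c0_iff (c : Conf n Q q₀) :
    suppF c ⊆ D ↔ c = override D (restr D c) (c0 n Q q₀) := by
  constructor
  · intro h
    apply Subtype.ext; funext x
    by_cases hx : x ∈ D
    · rw [override_val_mem D _ _ hx]; rfl
    · rw [override_val_not_mem D _ _ hx]
      show c.1 x = q₀
      by_contra hne
      exact hx (h (mem_suppF.mpr hne))
  · intro h x hx
    by_contra hxD
    have := congrArg (fun c : Conf n Q q₀ => c.1 x) h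
    rw [override_val_not_mem D _ _ hxD] at this
    exact (mem_suppF.mp hx) this

lemma inner_eVec_left (c : Conf n Q q₀) (φ : H n Q q₀) :
    (inner ℂ (eVec c) φ : ℂ) = (φ : Conf n Q q₀ → ℂ) c := by
  classical
  unfold eVec
  rw [lp.inner_single_left]
  simp

/-- The `D`-block truncation is at least as good an approximation as any truncation onto
basis vectors supported in `D`. -/
lemma trunc_best (G : Finset (Conf n Q q₀)) (hG : ∀ c' ∈ G, suppF c' ⊆ D) (φ : H n Q q₀) :
    ‖φ - ∑ f : {x // x ∈ D} → Q,
        (inner ℂ (eVec (override D f (c0 n Q q₀))) φ : ℂ) • eVec (override D f (c0 n Q q₀))‖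
      ≤ ‖φ - ∑ c' ∈ G, ((φ : Conf n Q q₀ → ℂ) c') • eVec c'‖ := by
  classical
  apply lp_norm_mono
  intro c''
  have coord_sum : ((∑ f : {x // x ∈ D} → Q,
      (inner ℂ (eVec (override D f (c0 n Q q₀))) φ : ℂ) • eVec (override D f (c0 n Q q₀)) :
        H n Q q₀) : Conf n Q q₀ → ℂ) c'' =
      ∑ f : {x // x ∈ D} → Q, (φ : Conf n Q q₀ → ℂ) (override D f (c0 n Q q₀)) *
        (if c'' = override D f (c0 n Q q₀) then 1 else 0) := by
    rw [lp.coeFn_sum, Finset.sum_apply]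
    congr 1; funext f
    rw [lp.coeFn_smul, Pi.smul_apply, eVec_apply, smul_eq_mul, inner_eVec_left]
  have coord_sumG : ((∑ c' ∈ G, ((φ : Conf n Q q₀ → ℂ) c') • eVec c' : H n Q q₀) :
      Conf n Q q₀ → ℂ) c'' = if c'' ∈ G then (φ : Conf n Q q₀ → ℂ) c'' else 0 := by
    rw [lp.coeFn_sum, Finset.sum_apply]
    rw [show (∑ c' ∈ G, ((((φ : Conf n Q q₀ → ℂ) c') • eVec c' : H n Q q₀) :
        Conf n Q q₀ → ℂ) c'') = ∑ c' ∈ G, (if c'' = c' then (φ : Conf n Q q₀ → ℂ) c' else 0)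
      from Finset.sum_congr rfl fun c' _ => by
        rw [lp.coeFn_smul, Pi.smul_apply, eVec_apply, smul_eq_mul]
        by_cases h : c'' = c' <;> simp [h]]
    rw [Finset.sum_ite_eq G c'' (fun c' => (φ : Conf n Q q₀ → ℂ) c')]
  rw [lp.coeFn_sub, Pi.sub_apply, coord_sum, lp.coeFn_sub, Pi.sub_apply, coord_sumG]
  by_cases hP : c'' = override D (restr D c'') (c0 n Q q₀)
  · have : ∀ f : {x // x ∈ D} → Q, (c'' = override D f (c0 n Q q₀)) ↔ (f = restr D c'') := by
      intro f
      rw [eq_override_cond_iff]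
      exact ⟨fun h => h.1, fun h => ⟨h, hP⟩⟩
    simp only [this, mul_ite, mul_one, mul_zero]
    rw [Finset.sum_ite_eq' Finset.univ (restr D c'')
      (fun f => (φ : Conf n Q q₀ → ℂ) (override D f (c0 n Q q₀)))]
    simp only [Finset.mem_univ, if_true, ← hP]
    rw [sub_self, norm_zero]
    positivity
  · have h1 : ∀ f : {x // x ∈ D} → Q, ¬ (c'' = override D f (c0 n Q q₀)) :=
      fun f h => hP ((eq_override_cond_iff D _ c'' f).mp h).2
    have h2 : c'' ∉ G := fun hmem => hP ((eq_override_c0_iff D c'').mp (hG c'' hmem))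
    simp only [h1, if_false, mul_zero, Finset.sum_const_zero, h2, sub_zero]
    exact le_refl _

end Aux6
set_option maxHeartbeats 1000000 in
/-- Density Theorem, strong operator topology. The local operators are dense in
the bounded operators on `H` in the strong operator topology. -/
theorem local_operators_dense_strong
    (n : ℕ) (hn : 1 ≤ n) (Q : Type) [Fintype Q] (q₀ : Q)
    (A : H n Q q₀ →L[ℂ] H n Q q₀) (ε : ℝ) (hε : 0 < ε) (m : ℕ) (v : Fin m → H n Q q₀) :
    ∃ (D : Finset (Lat n)) (T : H n Q q₀ →L[ℂ] H n Q q₀),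
      IsLocalUpon q₀ D T ∧ ∀ i : Fin m, ‖A (v i) - T (v i)‖ < ε := by
  classical
  have hC : (0:ℝ) ≤ ‖A‖ := norm_nonneg A
  have hA1 : (0:ℝ) < ‖A‖ + 1 := by positivity
  set ε₁ : ℝ := ε / (4 * (‖A‖ + 1)) with hε₁def
  have hε₁ : 0 < ε₁ := by positivity
  -- generic finite-truncation approximation
  have htrunc : ∀ (φ : H n Q q₀) (δ : ℝ), 0 < δ → ∃ s : Finset (Conf n Q q₀),
      ‖(∑ c ∈ s, ((φ : Conf n Q q₀ → ℂ) c) • eVec c) - φ‖ < δ := by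
    intro φ δ hδ
    have hs := lp.hasSum_single (E := fun _ : Conf n Q q₀ => ℂ) (p := 2) (by simp) φ
    have hev := Metric.tendsto_nhds.mp hs δ hδ
    obtain ⟨s, hsel⟩ := hev.exists
    refine ⟨s, ?_⟩
    rw [dist_eq_norm] at hsel
    rw [show (∑ c ∈ s, ((φ : Conf n Q q₀ → ℂ) c) • eVec c) =
        ∑ c ∈ s, lp.single 2 c ((φ : Conf n Q q₀ → ℂ) c) from
      Finset.sum_congr rfl fun c _ => (single_eq_smul_eVec c _).symm]
    exact hsel
  -- simultaneous tail approximation of all `v i`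
  have hev : ∀ i : Fin m, ∀ᶠ s : Finset (Conf n Q q₀) in Filter.atTop,
      ‖(∑ c ∈ s, ((v i : Conf n Q q₀ → ℂ) c) • eVec c) - v i‖ < ε₁ := by
    intro i
    have hs := lp.hasSum_single (E := fun _ : Conf n Q q₀ => ℂ) (p := 2) (by simp) (v i)
    have := Metric.tendsto_nhds.mp hs ε₁ hε₁
    refine this.mono fun s hsel => ?_
    rw [dist_eq_norm] at hsel
    rw [show (∑ c ∈ s, ((v i : Conf n Q q₀ → ℂ) c) • eVec c) =
        ∑ c ∈ s, lp.single 2 c ((v i : Conf n Q q₀ → ℂ) c) from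
      Finset.sum_congr rfl fun c _ => (single_eq_smul_eVec c _).symm]
    exact hsel
  obtain ⟨F, hF⟩ := (Filter.eventually_all.mpr hev).exists
  set w : Fin m → H n Q q₀ := fun i => ∑ c ∈ F, ((v i : Conf n Q q₀ → ℂ) c) • eVec c with hwdef
  have hwv : ∀ i, ‖w i - v i‖ < ε₁ := hF
  set B : ℝ := (∑ i : Fin m, ∑ c ∈ F, ‖(v i : Conf n Q q₀ → ℂ) c‖) + 1 with hBdef
  have hB1 : ∀ i : Fin m, ∑ c ∈ F, ‖(v i : Conf n Q q₀ → ℂ) c‖ ≤ B - 1 := by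
    intro i
    rw [hBdef, add_sub_cancel_right]
    exact Finset.single_le_sum (f := fun i : Fin m => ∑ c ∈ F, ‖(v i : Conf n Q q₀ → ℂ) c‖)
      (fun j _ => Finset.sum_nonneg fun c _ => norm_nonneg _) (Finset.mem_univ i)
  have hB0 : (0:ℝ) < B := by
    have : (0:ℝ) ≤ ∑ i : Fin m, ∑ c ∈ F, ‖(v i : Conf n Q q₀ → ℂ) c‖ :=
      Finset.sum_nonneg fun j _ => Finset.sum_nonneg fun c _ => norm_nonneg _
    rw [hBdef]; linarith
  set δ : ℝ := ε / (2 * B) with hδdef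
  have hδ : 0 < δ := by positivity
  -- tails of the images of basis vectors
  have hGex : ∀ c : Conf n Q q₀, ∃ G : Finset (Conf n Q q₀),
      ‖(∑ c' ∈ G, ((A (eVec c) : Conf n Q q₀ → ℂ) c') • eVec c') - A (eVec c)‖ < δ :=
    fun c => htrunc (A (eVec c)) δ hδ
  choose G hG using hGex
  set D : Finset (Lat n) := F.sup (fun c => suppF c ⊔ (G c).sup suppF) with hDdef
  have hsuppF : ∀ c ∈ F, suppF c ⊆ D := fun c hc =>
    le_trans le_sup_left (Finset.le_sup (f := fun c => suppF c ⊔ (G c).sup suppF) hc)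
  have hsuppG : ∀ c ∈ F, ∀ c' ∈ G c, suppF c' ⊆ D := fun c hc c' hc' =>
    le_trans (le_trans (Finset.le_sup hc') le_sup_right)
      (Finset.le_sup (f := fun c => suppF c ⊔ (G c).sup suppF) hc)
  have hbound := ruleOf_bound D A
  set T := Top D (ruleOf D A) hC hbound with hTdef
  refine ⟨D, T, Top_isLocal D (ruleOf D A) hC hbound, ?_⟩
  -- key estimate on basis vectors supported in `D`
  have hkey : ∀ c ∈ F, ‖A (eVec c) - T (eVec c)‖ < δ := by
    intro c hc
    have hc0 : c = override D (restr D c) (c0 n Q q₀) := (eq_override_c0_iff D c).mp (hsuppF c hc)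
    have hT : T (eVec c) = ∑ f : {x // x ∈ D} → Q,
        (inner ℂ (eVec (override D f (c0 n Q q₀))) (A (eVec c)) : ℂ) •
          eVec (override D f (c0 n Q q₀)) := by
      rw [hTdef, Top_apply_eVec]
      refine Finset.sum_congr rfl fun f _ => ?_
      congr 1
      · show ruleOf D A f (restr D c) = _
        unfold ruleOf
        rw [← hc0]
      · conv_lhs => rw [hc0]
        rw [override_override]
    rw [hT]
    calc ‖A (eVec c) - ∑ f : {x // x ∈ D} → Q,
          (inner ℂ (eVec (override D f (c0 n Q q₀))) (A (eVec c)) : ℂ) •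
            eVec (override D f (c0 n Q q₀))‖
        ≤ ‖A (eVec c) - ∑ c' ∈ G c, ((A (eVec c) : Conf n Q q₀ → ℂ) c') • eVec c'‖ :=
          trunc_best D (G c) (hsuppG c hc) (A (eVec c))
      _ < δ := by rw [norm_sub_rev]; exact hG c
  -- final triangle inequality
  intro i
  have hsplit : A (v i) - T (v i) = A (v i - w i) + (A (w i) - T (w i)) + T (w i - v i) := by
    rw [map_sub, map_sub]
    abel
  have h1 : ‖A (v i - w i)‖ ≤ ‖A‖ * ε₁ := by
    refine le_trans (A.le_opNorm _) ?_
    have : ‖v i - w i‖ ≤ ε₁ := by rw [norm_sub_rev]; exact (hwv i).le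
    exact mul_le_mul_of_nonneg_left this hC
  have h3 : ‖T (w i - v i)‖ ≤ ‖A‖ * ε₁ := by
    refine le_trans (Top_norm_le D (ruleOf D A) hC hbound _) ?_
    exact mul_le_mul_of_nonneg_left (hwv i).le hC
  have h2 : ‖A (w i) - T (w i)‖ ≤ (B - 1) * δ := by
    have hexp : A (w i) - T (w i) =
        ∑ c ∈ F, ((v i : Conf n Q q₀ → ℂ) c) • (A (eVec c) - T (eVec c)) := by
      rw [hwdef]
      rw [map_sum, map_sum]
      rw [← Finset.sum_sub_distrib]
      refine Finset.sum_congr rfl fun c _ => ?_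
      rw [map_smul, map_smul, smul_sub]
    rw [hexp]
    refine le_trans (norm_sum_le _ _) ?_
    calc ∑ c ∈ F, ‖((v i : Conf n Q q₀ → ℂ) c) • (A (eVec c) - T (eVec c))‖
        ≤ ∑ c ∈ F, ‖(v i : Conf n Q q₀ → ℂ) c‖ * δ := by
          refine Finset.sum_le_sum fun c hc => ?_
          rw [norm_smul]
          exact mul_le_mul_of_nonneg_left (hkey c hc).le (norm_nonneg _)
      _ = (∑ c ∈ F, ‖(v i : Conf n Q q₀ → ℂ) c‖) * δ := by rw [← Finset.sum_mul]
      _ ≤ (B - 1) * δ := mul_le_mul_of_nonneg_right (hB1 i) hδ.le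
  have e1 : ‖A‖ * ε₁ ≤ ε / 4 := by
    rw [hε₁def, mul_div_assoc']
    rw [div_le_div_iff₀ (by positivity) (by norm_num)]
    nlinarith [mul_nonneg hC hε.le, hε.le]
  have e2 : (B - 1) * δ < ε / 2 := by
    rw [hδdef, mul_div_assoc']
    rw [div_lt_div_iff₀ (by positivity) (by norm_num)]
    nlinarith [hε, hB0]
  calc ‖A (v i) - T (v i)‖
      ≤ ‖A (v i - w i)‖ + ‖A (w i) - T (w i)‖ + ‖T (w i - v i)‖ := by
        rw [hsplit]; exact norm_add₃_le
    _ < ε / 4 + ε / 2 + ε / 4 := by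
        have := lt_of_le_of_lt h2 e2
        have g1 := le_trans h1 e1
        have g3 := le_trans h3 e1
        linarith
    _ = ε := by ring

end QCA
end
end

section
/- The propagation map s is a bijection of Ĉ, and there is a unique unitary operator σ on Ĥ with σ e_c = e_{s c} for all c ∈ Ĉ; moreover σ is translation-invariant, and σ is causal relative to 𝒩: for every x ∈ ℤ^n and every bounded operator A on Ĥ local upon {x}, σ⁻¹ A σ is local upon 𝒩_x. -/
open scoped ENNReal

noncomputable section

namespace QCA

section Aux

variable {n : ℕ} {A : Type*} {q0 : A}

theorem lpCongr_eVec (e : Conf n A q0 ≃ Conf n A q0) (c : Conf n A q0) :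
    lpCongr e (eVec c) = eVec (e c) := by
  letI : DecidableEq (Conf n A q0) := Classical.decEq _
  apply lp.ext
  funext k
  show (eVec c : Conf n A q0 → ℂ) (e.symm k) = (eVec (e c) : Conf n A q0 → ℂ) k
  simp only [eVec, lp.single_apply]
  by_cases h : k = e c
  · subst h; simp
  · rw [Pi.single_apply, Pi.single_apply, if_neg h, if_neg]
    intro hk
    exact h (by rw [← e.apply_symm_apply k, hk])

theorem lpCongr_symm_eVec (e : Conf n A q0 ≃ Conf n A q0) (c : Conf n A q0) :
    (lpCongr e).symm (eVec c) = eVec (e.symm c) := by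
  have h := lpCongr_eVec e (e.symm c)
  rw [e.apply_symm_apply] at h
  rw [← h, LinearIsometryEquiv.symm_apply_apply]

/-- Continuous linear maps agreeing on all basis vectors are equal. -/
theorem clm_ext_eVec {T S : H n A q0 →L[ℂ] H n A q0}
    (h : ∀ c : Conf n A q0, T (eVec c) = S (eVec c)) : T = S := by
  refine ContinuousLinearMap.ext fun f => ?_
  letI : DecidableEq (Conf n A q0) := Classical.decEq _
  have hs : HasSum (fun c : Conf n A q0 => lp.single 2 c (f c : ℂ)) f :=
    lp.hasSum_single (by norm_num) f
  have key : ∀ c : Conf n A q0, lp.single 2 c (f c : ℂ) = (f c : ℂ) • eVec c := by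
    intro c
    rw [eVec]
    rw [← lp.single_smul]
    norm_num
  have hT : HasSum (fun c : Conf n A q0 => T (lp.single 2 c (f c : ℂ))) (T f) :=
    T.hasSum hs
  have hS : HasSum (fun c : Conf n A q0 => S (lp.single 2 c (f c : ℂ))) (S f) :=
    S.hasSum hs
  have : (fun c : Conf n A q0 => T (lp.single 2 c (f c : ℂ)))
      = fun c : Conf n A q0 => S (lp.single 2 c (f c : ℂ)) := by
    funext c
    rw [key, map_smul, map_smul, h]
  rw [this] at hT
  exact hT.unique hS

end Aux

section Adj

variable {E : Type*} [NormedAddCommGroup E] [InnerProductSpace ℂ E] [CompleteSpace E]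

theorem adjoint_isomCLM (e : E ≃ₗᵢ[ℂ] E) :
    ContinuousLinearMap.adjoint (isomCLM e) = isomCLM e.symm := by
  symm
  rw [ContinuousLinearMap.eq_adjoint_iff]
  intro x y
  show (inner ℂ (e.symm x) y : ℂ) = inner ℂ x (e y)
  rw [← e.inner_map_map (e.symm x) y, e.apply_symm_apply]

theorem isomCLM_mem_unitary (e : E ≃ₗᵢ[ℂ] E) : isomCLM e ∈ unitary (E →L[ℂ] E) := by
  constructor
  · rw [ContinuousLinearMap.star_eq_adjoint, adjoint_isomCLM]
    ext x
    exact e.symm_apply_apply x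
  · rw [ContinuousLinearMap.star_eq_adjoint, adjoint_isomCLM]
    ext x
    exact e.apply_symm_apply x

end Adj

section SEquiv

variable {n : ℕ} {𝒩 : Finset (Lat n)} {K : {z // z ∈ 𝒩} → Type*}

/-- Inverse of the propagation map. -/
def sConfInv (qz : ∀ z : {z // z ∈ 𝒩}, K z) (c : Conf n (∀ z : {z // z ∈ 𝒩}, K z) qz) :
    Conf n (∀ z : {z // z ∈ 𝒩}, K z) qz :=
  ⟨fun x z => c.1 (x - z.1) z, by
    refine Set.Finite.subset
      (Set.finite_iUnion (fun z : {z // z ∈ 𝒩} =>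
        (c.2.preimage ((sub_left_injective (b := z.1)).injOn)))) ?_
    intro x hx
    obtain ⟨z, hz⟩ := Function.ne_iff.mp hx
    exact Set.mem_iUnion.2 ⟨z, fun h => hz (congrFun h z)⟩⟩

/-- The propagation map as a permutation of configurations. -/
def sEquiv (qz : ∀ z : {z // z ∈ 𝒩}, K z) :
    Conf n (∀ z : {z // z ∈ 𝒩}, K z) qz ≃ Conf n (∀ z : {z // z ∈ 𝒩}, K z) qz where
  toFun := sConf qz
  invFun := sConfInv qz
  left_inv c := Subtype.ext (funext fun x => funext fun z => by
    show c.1 (x - z.1 + z.1) z = c.1 x z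
    rw [sub_add_cancel])
  right_inv c := Subtype.ext (funext fun x => funext fun z => by
    show c.1 (x + z.1 - z.1) z = c.1 x z
    rw [add_sub_cancel_right])

end SEquiv

/-- STATEMENT 13. The propagation map `s` is a bijection of the set of finite configurations
in component form; there is a unique unitary `σ` on `Ĥ` with `σ e_c = e_{s c}`; moreover any
such `σ` is translation invariant and causal relative to `𝒩`. -/
theorem propagation_operator_properties
    (n : ℕ) (hn : 1 ≤ n) (𝒩 : Finset (Lat n)) (K : {z // z ∈ 𝒩} → Type)
    [∀ z, Fintype (K z)] [∀ z, Nonempty (K z)] (qz : ∀ z : {z // z ∈ 𝒩}, K z) :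
    Function.Bijective (sConf qz) ∧
      (∃! σ : unitary (H n (∀ z : {z // z ∈ 𝒩}, K z) qz →L[ℂ] H n (∀ z : {z // z ∈ 𝒩}, K z) qz),
        ∀ c : Conf n (∀ z : {z // z ∈ 𝒩}, K z) qz, (σ : H n (∀ z : {z // z ∈ 𝒩}, K z) qz →L[ℂ] H n (∀ z : {z // z ∈ 𝒩}, K z) qz) (eVec c) = eVec (sConf qz c)) ∧
      ∀ σ : H n (∀ z : {z // z ∈ 𝒩}, K z) qz →L[ℂ] H n (∀ z : {z // z ∈ 𝒩}, K z) qz, σ ∈ unitary (H n (∀ z : {z // z ∈ 𝒩}, K z) qz →L[ℂ] H n (∀ z : {z // z ∈ 𝒩}, K z) qz) →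
        (∀ c : Conf n (∀ z : {z // z ∈ 𝒩}, K z) qz, σ (eVec c) = eVec (sConf qz c)) →
          TranslationInvariant qz σ ∧
          ∀ (x : Lat n) (A : H n (∀ z : {z // z ∈ 𝒩}, K z) qz →L[ℂ] H n (∀ z : {z // z ∈ 𝒩}, K z) qz), IsLocalUpon qz {x} A →
            IsLocalUpon qz (nbhd 𝒩 x) (Ring.inverse σ ∘L A ∘L σ) := by
  classical
  constructor
  · exact (sEquiv qz).bijective
  let e := sEquiv qz
  let σL : H n (∀ z : {z // z ∈ 𝒩}, K z) qz ≃ₗᵢ[ℂ] H n (∀ z : {z // z ∈ 𝒩}, K z) qz := lpCongr e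
  let σ0 : H n (∀ z : {z // z ∈ 𝒩}, K z) qz →L[ℂ] H n (∀ z : {z // z ∈ 𝒩}, K z) qz := isomCLM σL
  let τ0 : H n (∀ z : {z // z ∈ 𝒩}, K z) qz →L[ℂ] H n (∀ z : {z // z ∈ 𝒩}, K z) qz := isomCLM σL.symm
  have hσ0 : ∀ c, σ0 (eVec c) = eVec (sConf qz c) := fun c => lpCongr_eVec e c
  have hτ0 : ∀ c, τ0 (eVec c) = eVec (sConfInv qz c) := fun c => lpCongr_symm_eVec e c
  have hmul1 : σ0 * τ0 = 1 := by
    refine ContinuousLinearMap.ext fun v => ?_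
    show σ0 (τ0 v) = v
    exact σL.apply_symm_apply v
  have hmul2 : τ0 * σ0 = 1 := by
    refine ContinuousLinearMap.ext fun v => ?_
    show τ0 (σ0 v) = v
    exact σL.symm_apply_apply v
  let u : (H n (∀ z : {z // z ∈ 𝒩}, K z) qz →L[ℂ] H n (∀ z : {z // z ∈ 𝒩}, K z) qz)ˣ := ⟨σ0, τ0, hmul1, hmul2⟩
  have hinv : Ring.inverse σ0 = τ0 := by
    have : σ0 = (u : H n (∀ z : {z // z ∈ 𝒩}, K z) qz →L[ℂ] H n (∀ z : {z // z ∈ 𝒩}, K z) qz) := rfl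
    rw [this, Ring.inverse_unit]
    rfl
  constructor
  · refine ⟨⟨σ0, isomCLM_mem_unitary σL⟩, hσ0, ?_⟩
    intro y hy
    exact Subtype.ext (clm_ext_eVec fun c => by rw [hy c, hσ0 c])
  intro σ hmem hσ
  have hσeq : σ = σ0 := clm_ext_eVec fun c => by rw [hσ c, hσ0 c]
  subst hσeq
  constructor
  · -- translation invariance
    intro z v
    have hT : (isomCLM (tau qz z)) ∘L σ0 ∘L (isomCLM (tau qz z).symm) = σ0 := by
      refine clm_ext_eVec fun c => ?_
      simp only [ContinuousLinearMap.comp_apply]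
      have h1 : (isomCLM (tau qz z).symm) (eVec c) = eVec ((shiftEquiv qz z).symm c) :=
        lpCongr_symm_eVec (shiftEquiv qz z) c
      have h2 : ∀ d, (isomCLM (tau qz z)) (eVec d) = eVec (shiftConf z d) := fun d =>
        lpCongr_eVec (shiftEquiv qz z) d
      rw [h1, hσ0, h2, hσ0]
      congr 1
      refine Subtype.ext (funext fun x => funext fun w => ?_)
      show c.1 (x + z + w.1 + -z) w = c.1 (x + w.1) w
      congr 1
      abel
    exact DFunLike.congr_fun hT v
  · -- causality
    intro x A hA
    obtain ⟨a, hA⟩ := hA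
    have hmemD : ∀ w : {z // z ∈ 𝒩}, x + w.1 ∈ nbhd 𝒩 x := fun w =>
      Finset.mem_image.2 ⟨w.1, w.2, rfl⟩
    refine ⟨fun g h => ∑ f : {y // y ∈ ({x} : Finset (Lat n))} → (∀ z : {z // z ∈ 𝒩}, K z),
      (if g = (fun (y : {y // y ∈ nbhd 𝒩 x}) (w : {z // z ∈ 𝒩}) =>
          if y.1 - w.1 = x then f ⟨x, Finset.mem_singleton_self x⟩ w else h y w)
        then a f (fun _ => fun w => h ⟨x + w.1, hmemD w⟩ w) else 0), fun c => ?_⟩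
    have hkey : ∀ f : {y // y ∈ ({x} : Finset (Lat n))} → (∀ z : {z // z ∈ 𝒩}, K z),
        sConfInv qz (override {x} f (sConf qz c)) =
          override (nbhd 𝒩 x)
            (fun (y : {y // y ∈ nbhd 𝒩 x}) (w : {z // z ∈ 𝒩}) =>
              if y.1 - w.1 = x then f ⟨x, Finset.mem_singleton_self x⟩ w
              else (fun y : {y // y ∈ nbhd 𝒩 x} => c.1 y.1) y w) c := by
      intro f
      refine Subtype.ext (funext fun y => funext fun w => ?_)
      show (override {x} f (sConf qz c)).1 (y - w.1) w = _
      by_cases hyw : y - w.1 = x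
      · have hyD : y ∈ nbhd 𝒩 x :=
          Finset.mem_image.2 ⟨w.1, w.2, by rw [← hyw]; abel⟩
        have h1 : y - w.1 ∈ ({x} : Finset (Lat n)) := Finset.mem_singleton.mpr hyw
        show (if h : y - w.1 ∈ ({x} : Finset (Lat n)) then f ⟨y - w.1, h⟩
              else (sConf qz c).1 (y - w.1)) w = _
        rw [dif_pos h1]
        have heq : (⟨y - w.1, h1⟩ : {y // y ∈ ({x} : Finset (Lat n))})
            = ⟨x, Finset.mem_singleton_self x⟩ := Subtype.ext hyw
        rw [heq]
        show _ = (override (nbhd 𝒩 x) _ c).1 y w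
        show _ = (if h : y ∈ nbhd 𝒩 x then
            (fun (y : {y // y ∈ nbhd 𝒩 x}) (w : {z // z ∈ 𝒩}) =>
              if y.1 - w.1 = x then f ⟨x, Finset.mem_singleton_self x⟩ w
              else c.1 y.1 w) ⟨y, h⟩ else c.1 y) w
        rw [dif_pos hyD]
        simp only [hyw, if_true]
      · have h1 : y - w.1 ∉ ({x} : Finset (Lat n)) := fun h =>
          hyw (Finset.mem_singleton.mp h)
        show (if h : y - w.1 ∈ ({x} : Finset (Lat n)) then f ⟨y - w.1, h⟩
              else (sConf qz c).1 (y - w.1)) w = _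
        rw [dif_neg h1]
        show c.1 (y - w.1 + w.1) w = _
        rw [sub_add_cancel]
        show _ = (if h : y ∈ nbhd 𝒩 x then
            (fun (y : {y // y ∈ nbhd 𝒩 x}) (w : {z // z ∈ 𝒩}) =>
              if y.1 - w.1 = x then f ⟨x, Finset.mem_singleton_self x⟩ w
              else c.1 y.1 w) ⟨y, h⟩ else c.1 y) w
        by_cases hy : y ∈ nbhd 𝒩 x
        · rw [dif_pos hy]
          simp only [hyw, if_false]
        · rw [dif_neg hy]
    have hrestr : (fun y : {y // y ∈ ({x} : Finset (Lat n))} => (sConf qz c).1 y.1) =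
        (fun (_ : {y // y ∈ ({x} : Finset (Lat n))}) (w : {z // z ∈ 𝒩}) =>
          (fun y : {y // y ∈ nbhd 𝒩 x} => c.1 y.1) ⟨x + w.1, hmemD w⟩ w) := by
      funext y w
      have hy : y.1 = x := Finset.mem_singleton.mp y.2
      show c.1 (y.1 + w.1) w = c.1 (x + w.1) w
      rw [hy]
    rw [ContinuousLinearMap.comp_apply, ContinuousLinearMap.comp_apply, hσ0, hA, hinv,
      map_sum]
    simp only [map_smul]
    rw [hrestr]
    have hterm : ∀ f : {y // y ∈ ({x} : Finset (Lat n))} → (∀ z : {z // z ∈ 𝒩}, K z),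
        τ0 (eVec (override {x} f (sConf qz c))) =
          eVec (override (nbhd 𝒩 x)
            (fun (y : {y // y ∈ nbhd 𝒩 x}) (w : {z // z ∈ 𝒩}) =>
              if y.1 - w.1 = x then f ⟨x, Finset.mem_singleton_self x⟩ w
              else (fun y : {y // y ∈ nbhd 𝒩 x} => c.1 y.1) y w) c) := by
      intro f
      rw [hτ0, hkey]
    simp only [hterm]
    simp only [Finset.sum_smul, ite_smul, zero_smul]
    rw [Finset.sum_comm]
    simp only [Finset.sum_ite_eq', Finset.mem_univ, if_true]

end QCA
end
end
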